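/- Let M ≠ 0, Λ ∈ ℝ, and let ℓ ≥ 2 be an integer. With μ = (ℓ−1)(ℓ+2), w = (ℓ−1)ℓ(ℓ+1)(ℓ+2)/(12M), f(r) = 1 − 2M/r − Λr²/3, W(r) = w + 6M f(r)/(r(μr + 6M)), and the Zerilli potential V^Z(r) = ((μ²ℓ(ℓ+1) − 24M²Λ)r³ + 6μ²Mr² + 36μM²r + 72M³)/(r³(μr + 6M)²), one has, for all r > 0 with μr + 6M ≠ 0: f(r)·W'(r) + W(r)² − w² = f(r)·V^Z(r). -/

import Mathlib

/-- Chandrasekhar's Riccati identity for the Zerilli potential: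
`f W' + W² - w² = f V^Z`, i.e. the factorization `H⁺ + w² = D⁺ D⁻` of the
Zerilli operator, extended to `Λ ≠ 0`. -/
theorem stmt_9 (M Λ : ℝ) (hM : M ≠ 0) (ℓ : ℕ) (hℓ : 2 ≤ ℓ) :
    let μ : ℝ := ((ℓ : ℝ) - 1) * ((ℓ : ℝ) + 2)
    let w : ℝ := ((ℓ : ℝ) - 1) * (ℓ : ℝ) * ((ℓ : ℝ) + 1) * ((ℓ : ℝ) + 2) / (12 * M)
    let f : ℝ → ℝ := fun r => 1 - 2 * M / r - Λ * r ^ 2 / 3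
    let W : ℝ → ℝ := fun r => w + 6 * M * f r / (r * (μ * r + 6 * M))
    let VZ : ℝ → ℝ := fun r =>
      ((μ ^ 2 * (ℓ : ℝ) * ((ℓ : ℝ) + 1) - 24 * M ^ 2 * Λ) * r ^ 3
          + 6 * μ ^ 2 * M * r ^ 2 + 36 * μ * M ^ 2 * r + 72 * M ^ 3)
        / (r ^ 3 * (μ * r + 6 * M) ^ 2)
    ∀ r : ℝ, 0 < r → μ * r + 6 * M ≠ 0 →
      f r * deriv W r + (W r) ^ 2 - w ^ 2 = f r * VZ r := by
  intro μ w f W VZ r hr hd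
  have hr0 : r ≠ 0 := ne_of_gt hr
  have hrd : r * (μ * r + 6 * M) ≠ 0 := mul_ne_zero hr0 hd
  -- derivative of f
  have hf : HasDerivAt f (2 * M / r ^ 2 - 2 * Λ * r / 3) r := by
    have h1 : HasDerivAt (fun x : ℝ => 2 * M / x) (2 * M * (-(r ^ 2)⁻¹)) r := by
      simpa [div_eq_mul_inv] using (hasDerivAt_inv hr0).const_mul (2 * M)
    have h2 : HasDerivAt (fun x : ℝ => Λ * x ^ 2 / 3) (Λ * (2 * r) / 3) r := by
      simpa using ((hasDerivAt_pow 2 r).const_mul Λ).div_const 3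
    have := ((hasDerivAt_const r (1:ℝ)).sub h1).sub h2
    refine this.congr_deriv ?_
    field_simp
    ring
  -- derivative of denominator
  have hden : HasDerivAt (fun x : ℝ => x * (μ * x + 6 * M)) (2 * μ * r + 6 * M) r := by
    have := (hasDerivAt_id r).mul (((hasDerivAt_id r).const_mul μ).add_const (6 * M))
    refine this.congr_deriv ?_
    simp only [id_eq]
    ring
  have hW : HasDerivAt W
      ((6 * M * (2 * M / r ^ 2 - 2 * Λ * r / 3) * (r * (μ * r + 6 * M))
        - 6 * M * f r * (2 * μ * r + 6 * M)) / (r * (μ * r + 6 * M)) ^ 2) r := by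
    exact (((hf.const_mul (6 * M)).div hden hrd).const_add w)
  rw [hW.deriv]
  show f r * _ + (w + 6 * M * f r / (r * (μ * r + 6 * M))) ^ 2 - w ^ 2 = f r * VZ r
  have hμ : μ = ((ℓ : ℝ) - 1) * ((ℓ : ℝ) + 2) := rfl
  clear_value μ
  simp only [f, VZ, w]
  have hd2 : r * μ + M * 6 ≠ 0 := by rwa [mul_comm r, mul_comm M]
  field_simp
  rw [hμ]
  ring
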